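/- Let ℳ be a bounded operator on 𝒳, U,V⊂S disjoint with U≠∅, W=U∪V, λ,η∈ℂ nonzero, λ in the resolvent set of ℳ_{VV}. A functional ν∈𝒳* satisfies ℳ[U,V,λ]*ν(χ_U f)=ην(χ_U f), ν(χ_V f)=((λ/η)ℳ_{UV}(λI-ℳ_{VV})^{-1})*ν(f), and ν(χ_{S∖W}f)=0 for all f∈𝒳, if and only if (ℳ_{UW}+(η/λ)ℳ_{VW})*ν = ην. Moreover, η is an eigenvalue of ℳ[U,V,λ]* if and only if η is an eigenvalue of (ℳ_{UW}+(η/λ)ℳ_{VW})*. -/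

import Mathlib

open ContinuousLinearMap

/-- Proposition `prop:PC_evalprop`(2): dual eigenvector correspondence for the Perron
complement `ℳ[U,V,λ] = ℳ_UU + ℳ_UV(λI-ℳ_VV)⁻¹ℳ_VU`. Here `R = (λI - ℳ_VV)⁻¹`,
and adjoint conditions are stated pointwise: `(T*ν)(f) = ν(T f)`. -/
theorem stmt7 {S 𝒳 : Type*} [NormedAddCommGroup 𝒳] [NormedSpace ℂ 𝒳] [CompleteSpace 𝒳]
    (e : Set S → (𝒳 →L[ℂ] 𝒳))
    (he : ∀ U V : Set S, (e U) ∘L (e V) = e (U ∩ V))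
    (hbot : e ∅ = 0)
    (hadd : ∀ U V : Set S, Disjoint U V → e (U ∪ V) = e U + e V)
    (hcompl : ∀ U : Set S, e U + e Uᶜ = 1)
    (ℳ : 𝒳 →L[ℂ] 𝒳) (U V : Set S) (hUV : Disjoint U V) (hU : U.Nonempty)
    (lam η : ℂ) (hlam : lam ≠ 0) (hη : η ≠ 0)
    (R : 𝒳 →L[ℂ] 𝒳)
    (hR1 : (lam • (1 : 𝒳 →L[ℂ] 𝒳) - (e V ∘L ℳ ∘L e V)) ∘L R = 1)
    (hR2 : R ∘L (lam • (1 : 𝒳 →L[ℂ] 𝒳) - (e V ∘L ℳ ∘L e V)) = 1) :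
    let W := U ∪ V
    let MUU := e U ∘L ℳ ∘L e U
    let MUV := e U ∘L ℳ ∘L e V
    let MVU := e V ∘L ℳ ∘L e U
    let MUW := e U ∘L ℳ ∘L e W
    let MVW := e V ∘L ℳ ∘L e W
    let PC := MUU + MUV ∘L (R ∘L MVU)
    (∀ ν : 𝒳 →L[ℂ] ℂ,
      ((∀ f : 𝒳, ν (PC (e U f)) = η * ν (e U f)) ∧
        (∀ f : 𝒳, ν (e V f) = (lam / η) * ν (MUV (R f))) ∧
        (∀ f : 𝒳, ν (e Wᶜ f) = 0)) ↔
      (∀ f : 𝒳, ν ((MUW + (η / lam) • MVW) f) = η * ν f)) ∧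
    ((∃ ν : 𝒳 →L[ℂ] ℂ, ν ≠ 0 ∧ ∀ f : 𝒳, ν (PC f) = η * ν f) ↔
      (∃ ν : 𝒳 →L[ℂ] ℂ, ν ≠ 0 ∧
        ∀ f : 𝒳, ν ((MUW + (η / lam) • MVW) f) = η * ν f)) := by
  intro W MUU MUV MVU MUW MVW PC
  -- pointwise projection lemmas
  have pUU : ∀ f, e U (e U f) = e U f := by
    intro f
    have := ContinuousLinearMap.ext_iff.mp (he U U) f
    simpa using this
  have pVV : ∀ f, e V (e V f) = e V f := by
    intro f
    have := ContinuousLinearMap.ext_iff.mp (he V V) f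
    simpa using this
  have pUV : ∀ f, e U (e V f) = 0 := by
    intro f
    have := ContinuousLinearMap.ext_iff.mp (he U V) f
    rw [Set.disjoint_iff_inter_eq_empty.mp hUV, hbot] at this
    simpa using this
  have pVU : ∀ f, e V (e U f) = 0 := by
    intro f
    have := ContinuousLinearMap.ext_iff.mp (he V U) f
    rw [Set.inter_comm, Set.disjoint_iff_inter_eq_empty.mp hUV, hbot] at this
    simpa using this
  have pUWc : ∀ f, e U (e Wᶜ f) = 0 := by
    intro f
    have := ContinuousLinearMap.ext_iff.mp (he U Wᶜ) f
    have h2 : U ∩ Wᶜ = ∅ := by ext x; simp [W]; tauto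
    rw [h2, hbot] at this
    simpa using this
  have pVWc : ∀ f, e V (e Wᶜ f) = 0 := by
    intro f
    have := ContinuousLinearMap.ext_iff.mp (he V Wᶜ) f
    have h2 : V ∩ Wᶜ = ∅ := by ext x; simp [W]; tauto
    rw [h2, hbot] at this
    simpa using this
  have pdec : ∀ f : 𝒳, e U f + e V f + e Wᶜ f = f := by
    intro f
    have := ContinuousLinearMap.ext_iff.mp (hcompl W) f
    rw [show e W = e U + e V from hadd U V hUV] at this
    simpa [add_assoc] using this
  -- resolvent lemmas (pointwise)
  have h1 : ∀ x, lam • R x - e V (ℳ (e V (R x))) = x := by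
    intro x
    have := ContinuousLinearMap.ext_iff.mp hR1 x
    simpa [comp_apply, sub_apply, smul_apply, one_apply] using this
  have h2 : ∀ x, R (lam • x - e V (ℳ (e V x))) = x := by
    intro x
    have := ContinuousLinearMap.ext_iff.mp hR2 x
    simpa [comp_apply, sub_apply, smul_apply, one_apply] using this
  have pRV : ∀ f, R (e V f) = e V (R f) := by
    intro f
    have h3 : ∀ x, e V (lam • x - e V (ℳ (e V x))) =
        lam • e V x - e V (ℳ (e V (e V x))) := by
      intro x; simp [map_sub, map_smul, pVV]
    calc R (e V f) = R (e V (lam • R f - e V (ℳ (e V (R f))))) := by rw [h1]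
      _ = R (lam • e V (R f) - e V (ℳ (e V (e V (R f))))) := by rw [h3]
      _ = e V (R f) := h2 _
  have pMVVR : ∀ f, e V (ℳ (e V (R f))) = lam • R f - f := by
    intro f
    have := h1 f
    rw [sub_eq_iff_eq_add] at this
    rw [this, add_sub_cancel_left]
  have pRMVV : ∀ x, R (e V (ℳ (e V x))) = lam • R x - x := by
    intro x
    have h4 := h2 x
    rw [map_sub, map_smul] at h4
    rw [sub_eq_iff_eq_add] at h4
    rw [h4, add_sub_cancel_left]
  -- application unfoldings
  have aMUU : ∀ f, MUU f = e U (ℳ (e U f)) := fun f => by simp [MUU, comp_apply]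
  have aMUV : ∀ f, MUV f = e U (ℳ (e V f)) := fun f => by simp [MUV, comp_apply]
  have aMVU : ∀ f, MVU f = e V (ℳ (e U f)) := fun f => by simp [MVU, comp_apply]
  have aMUW : ∀ f, MUW f = e U (ℳ (e U f)) + e U (ℳ (e V f)) := by
    intro f
    have hW : ∀ g, e W g = e U g + e V g := by
      intro g
      have := ContinuousLinearMap.ext_iff.mp (hadd U V hUV) g
      simpa using this
    simp [MUW, comp_apply, hW, map_add]
  have aMVW : ∀ f, MVW f = e V (ℳ (e U f)) + e V (ℳ (e V f)) := by
    intro f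
    have hW : ∀ g, e W g = e U g + e V g := by
      intro g
      have := ContinuousLinearMap.ext_iff.mp (hadd U V hUV) g
      simpa using this
    simp [MVW, comp_apply, hW, map_add]
  have aPC : ∀ f, PC f = MUU f + MUV (R (MVU f)) := fun f => by
    simp [PC, add_apply, comp_apply]
  -- key composite lemma : MUV (R y) only sees e V y
  have pMUVReV : ∀ y, MUV (R y) = MUV (R (e V y)) := by
    intro y
    rw [aMUV (R y), aMUV (R (e V y)), pRV, pVV]
  have aPCU : ∀ f, PC (e U f) = PC f := by
    intro f
    rw [aPC, aPC, aMUU, aMUU, aMVU, aMVU, pUU]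
  -- range facts
  have pUMUV : ∀ x, e U (MUV x) = MUV x := by
    intro x; rw [aMUV, pUU, ← aMUV]
  have pVMUV : ∀ x, e V (MUV x) = 0 := by
    intro x; rw [aMUV, pVU]
  have pUPC : ∀ x, e U (PC x) = PC x := by
    intro x
    rw [aPC, map_add, aMUU, pUU, ← aMUU, pUMUV]
  -- the main equivalence
  have key : ∀ ν : 𝒳 →L[ℂ] ℂ,
      ((∀ f : 𝒳, ν (PC (e U f)) = η * ν (e U f)) ∧
        (∀ f : 𝒳, ν (e V f) = (lam / η) * ν (MUV (R f))) ∧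
        (∀ f : 𝒳, ν (e Wᶜ f) = 0)) ↔
      (∀ f : 𝒳, ν ((MUW + (η / lam) • MVW) f) = η * ν f) := by
    intro ν
    constructor
    · rintro ⟨ha, hb, hc⟩ f
      rw [show (MUW + (η / lam) • MVW) f = MUW f + (η / lam) • MVW f from rfl,
        map_add, map_smul, smul_eq_mul]
      have e1 : ν (MUW f) = ν (MUU f) + ν (MUV f) := by
        rw [aMUW, map_add, ← aMUU, ← aMUV]
      have e2 : ν (MVW f) = ν (MVU f) + ν (e V (ℳ (e V f))) := by
        rw [aMVW, map_add, ← aMVU]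
      have F2 : ν (MVU f) = lam / η * ν (MUV (R (MVU f))) := by
        have hb2 := hb (ℳ (e U f))
        rw [← aMVU, pMUVReV, ← aMVU] at hb2
        exact hb2
      have F3 : ν (e V (ℳ (e V f))) = lam / η * (lam * ν (MUV (R f)) - ν (MUV f)) := by
        have hb3 := hb (ℳ (e V f))
        rw [pMUVReV] at hb3
        rw [show MUV (R (e V (ℳ (e V f)))) = lam • MUV (R f) - MUV f from by
          rw [pRMVV, map_sub, map_smul]] at hb3
        rw [map_sub, map_smul, smul_eq_mul] at hb3
        exact hb3
      have F4 : ν f = ν (e U f) + ν (e V f) := by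
        conv_lhs => rw [← pdec f]
        rw [map_add, map_add, hc, add_zero]
      have F1 : ν (MUU f) + ν (MUV (R (MVU f))) = η * ν (e U f) := by
        have h := ha f
        rw [aPCU, aPC, map_add] at h
        exact h
      have F5 := hb f
      rw [e1, e2, F2, F3, F4, F5]
      field_simp
      linear_combination F1
    · intro ht
      have ht' : ∀ g, ν (e U (ℳ (e U g))) + ν (e U (ℳ (e V g))) +
          η / lam * (ν (e V (ℳ (e U g))) + ν (e V (ℳ (e V g)))) = η * ν g := by
        intro g
        have h := ht g
        rw [show (MUW + (η / lam) • MVW) g = MUW g + (η / lam) • MVW g from rfl,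
          map_add, map_smul, smul_eq_mul, aMUW, aMVW, map_add, map_add] at h
        exact h
      have hc : ∀ f, ν (e Wᶜ f) = 0 := by
        intro f
        have h := ht' (e Wᶜ f)
        simp only [pUWc, pVWc, map_zero, zero_add, add_zero, mul_zero] at h
        exact ((mul_eq_zero.mp h.symm).resolve_left hη)
      have hstar : ∀ g, ν (e U (ℳ (e V g))) + η / lam * ν (e V (ℳ (e V g)))
          = η * ν (e V g) := by
        intro g
        have h := ht' (e V g)
        simp only [pUV, pVV, map_zero, zero_add, add_zero] at h
        exact h
      have hb : ∀ g : 𝒳, ν (e V g) = lam / η * ν (MUV (R g)) := by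
        intro g
        have h := hstar (R g)
        have hrw : e V (ℳ (e V (R g))) = lam • e V (R g) - e V g := by
          calc e V (ℳ (e V (R g))) = e V (e V (ℳ (e V (R g)))) := (pVV _).symm
            _ = e V (lam • R g - g) := by rw [pMVVR]
            _ = lam • e V (R g) - e V g := by rw [map_sub, map_smul]
        rw [hrw, map_sub, map_smul, smul_eq_mul] at h
        rw [aMUV]
        field_simp at h ⊢
        linear_combination -h
      refine ⟨?_, hb, hc⟩
      intro f
      have h := ht' (e U f)
      simp only [pVU, pUU, map_zero, zero_add, add_zero] at h
      have h2 := hb (ℳ (e U f))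
      rw [pMUVReV] at h2
      have G' : lam * (ν (e U (ℳ (e U f))) + ν (MUV (R (e V (ℳ (e U f)))))) =
          lam * (η * ν (e U f)) := by
        field_simp at h h2
        linear_combination h - h2
      have G := mul_left_cancel₀ hlam G'
      rw [aPCU, aPC, map_add, aMUU, aMVU]
      exact G
  refine ⟨key, ?_⟩
  have pVPC : ∀ x, e V (PC x) = 0 := by
    intro x
    rw [aPC, map_add, aMUU, pVU, pVMUV, add_zero]
  constructor
  · rintro ⟨ν, hν0, hνe⟩
    set ν' : 𝒳 →L[ℂ] ℂ := ν.comp (e U) + (lam / η) • ν.comp (MUV.comp R) with hν'def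
    have aν' : ∀ x, ν' x = ν (e U x) + lam / η * ν (MUV (R x)) := by
      intro x
      simp [hν'def, add_apply, smul_apply, comp_apply, smul_eq_mul]
    have hν'U : ∀ x, ν' (e U x) = ν (e U x) := by
      intro x
      rw [aν', pUU, pMUVReV, pVU]
      simp
    have hν'PC : ∀ x, ν' (PC x) = ν (PC x) := by
      intro x
      rw [aν', pUPC, pMUVReV, pVPC]
      simp
    have cond1 : ∀ f, ν' (PC (e U f)) = η * ν' (e U f) := by
      intro f
      rw [hν'PC, hν'U]
      exact hνe (e U f)
    have cond2 : ∀ f, ν' (e V f) = lam / η * ν' (MUV (R f)) := by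
      intro f
      rw [aν', aν', pUV, pUMUV, pMUVReV (MUV (R f)), pVMUV, ← pMUVReV f]
      simp
    have cond3 : ∀ f, ν' (e Wᶜ f) = 0 := by
      intro f
      rw [aν', pUWc, pMUVReV, pVWc]
      simp
    have hν'ne : ν' ≠ 0 := by
      intro h0
      apply hν0
      have hz : ∀ y, ν (e U y) = 0 := by
        intro y
        rw [← hν'U y, h0]
        simp
      ext g
      simp only [ContinuousLinearMap.zero_apply]
      have h3 : η * ν g = 0 := by
        rw [← hνe g, ← pUPC g]
        exact hz _
      exact (mul_eq_zero.mp h3).resolve_left hη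
    exact ⟨ν', hν'ne, (key ν').mp ⟨cond1, cond2, cond3⟩⟩
  · rintro ⟨ν, hν0, hνe⟩
    obtain ⟨c1, c2, c3⟩ := (key ν).mpr hνe
    refine ⟨ν.comp (e U), ?_, ?_⟩
    · intro h0
      apply hν0
      have hz : ∀ y, ν (e U y) = 0 := by
        intro y
        have := ContinuousLinearMap.ext_iff.mp h0 y
        simpa [comp_apply] using this
      ext g
      simp only [ContinuousLinearMap.zero_apply]
      have hv : ν (e V g) = 0 := by
        rw [c2 g, aMUV, hz, mul_zero]
      rw [← pdec g, map_add, map_add, hz, hv, c3]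
      simp
    · intro f
      simp only [comp_apply]
      rw [pUPC, ← aPCU f]
      exact c1 f
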